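/- (Contraction for absolute value) For any sample Q of size n and any class F of real-valued functions on X, the empirical Rademacher complexity of the class |F| = {x ↦ |f(x)| : f ∈ F} satisfies Rad_Q(|F|) ≤ Rad_Q(F), since the absolute value is 1-Lipschitz and vanishes at 0. -/

import Mathlib

/-- Empirical Rademacher complexity of a class of real-valued functions on a
sample `x` of size `n`. -/
noncomputable def rad {X : Type*} (n : ℕ) (x : Fin n → X) (F : Set (X → ℝ)) : ℝ :=
  (1 / 2 ^ n : ℝ) * ∑ σ : Fin n → Bool,
    ⨆ f : F, (1 / n : ℝ) * ∑ i, (if σ i then (1 : ℝ) else -1) * (f : X → ℝ) (x i)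

namespace Stmt9Aux

open Finset


noncomputable def sgn (b : Bool) : ℝ := if b then 1 else -1

lemma abs_sgn (b : Bool) : |sgn b| = 1 := by cases b <;> simp [sgn]

noncomputable def E {X : Type*} (n : ℕ) (x : Fin n → X) (s : Finset (Fin n))
    (σ : Fin n → Bool) (f : X → ℝ) : ℝ :=
  (1 / n : ℝ) * ∑ i, sgn (σ i) * (if i ∈ s then |f (x i)| else f (x i))

lemma E_le {X : Type*} {n : ℕ} (hn : 0 < n) (x : Fin n → X) (s : Finset (Fin n))
    (σ : Fin n → Bool) {C : ℝ} {f : X → ℝ} (hf : ∀ a, |f a| ≤ C) :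
    E n x s σ f ≤ C := by
  have hterm : ∀ i : Fin n,
      sgn (σ i) * (if i ∈ s then |f (x i)| else f (x i)) ≤ C := by
    intro i
    calc sgn (σ i) * (if i ∈ s then |f (x i)| else f (x i))
        ≤ |sgn (σ i) * (if i ∈ s then |f (x i)| else f (x i))| := le_abs_self _
      _ = |(if i ∈ s then |f (x i)| else f (x i))| := by rw [abs_mul, abs_sgn, one_mul]
      _ ≤ C := by
        split
        · rw [abs_abs]; exact hf _
        · exact hf _
  have hsum : ∑ i : Fin n, sgn (σ i) * (if i ∈ s then |f (x i)| else f (x i)) ≤ n * C := by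
    calc ∑ i : Fin n, sgn (σ i) * (if i ∈ s then |f (x i)| else f (x i))
        ≤ ∑ _i : Fin n, C := Finset.sum_le_sum fun i _ => hterm i
      _ = n * C := by simp [mul_comm]
  have hc : (0:ℝ) ≤ 1 / n := by positivity
  have hn' : (n : ℝ) ≠ 0 := Nat.cast_ne_zero.2 hn.ne'
  calc E n x s σ f ≤ (1 / n : ℝ) * (n * C) := mul_le_mul_of_nonneg_left hsum hc
    _ = C := by field_simp

lemma bddE {X : Type*} {n : ℕ} (hn : 0 < n) (x : Fin n → X) {F : Set (X → ℝ)}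
    {C : ℝ} (hbdd : ∀ f ∈ F, ∀ a, |f a| ≤ C) (s : Finset (Fin n)) (σ : Fin n → Bool) :
    BddAbove (Set.range fun f : F => E n x s σ (f : X → ℝ)) := by
  refine ⟨C, ?_⟩
  rintro _ ⟨f, rfl⟩
  exact E_le hn x s σ (hbdd f f.2)

lemma ciSup_add_ciSup_le {ι : Type*} [Nonempty ι] {u v p q : ι → ℝ}
    (hp : BddAbove (Set.range p)) (hq : BddAbove (Set.range q))
    (h : ∀ i j, u i + v j ≤ max (p i + q j) (p j + q i)) :
    (⨆ i, u i) + ⨆ i, v i ≤ (⨆ i, p i) + ⨆ i, q i := by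
  have key : ∀ i j, u i + v j ≤ (⨆ i, p i) + ⨆ i, q i := by
    intro i j
    refine (h i j).trans (max_le ?_ ?_) <;>
      exact add_le_add (le_ciSup hp _) (le_ciSup hq _)
  have h1 : ∀ i, u i ≤ ((⨆ i, p i) + ⨆ i, q i) - ⨆ j, v j := by
    intro i
    rw [le_sub_iff_add_le]
    have : (⨆ j, v j) ≤ ((⨆ i, p i) + ⨆ i, q i) - u i :=
      ciSup_le fun j => by linarith [key i j]
    linarith
  have h2 : (⨆ i, u i) ≤ ((⨆ i, p i) + ⨆ i, q i) - ⨆ j, v j := ciSup_le h1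
  linarith

lemma step {X : Type*} {n : ℕ} (hn : 0 < n) (x : Fin n → X) {F : Set (X → ℝ)}
    (hne : F.Nonempty) {C : ℝ} (hbdd : ∀ f ∈ F, ∀ a, |f a| ≤ C)
    {s : Finset (Fin n)} {j : Fin n} (hj : j ∉ s) :
    ∑ σ : Fin n → Bool, ⨆ f : F, E n x (insert j s) σ (f : X → ℝ) ≤
      ∑ σ : Fin n → Bool, ⨆ f : F, E n x s σ (f : X → ℝ) := by
  have := hne.to_subtype
  set e := (Equiv.piSplitAt j (fun _ : Fin n => Bool)).symm with he
  have hre : ∀ (H : (Fin n → Bool) → ℝ), ∑ σ, H σ =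
      ∑ g : {i : Fin n // i ≠ j} → Bool, (H (e (true, g)) + H (e (false, g))) := by
    intro H
    rw [← Equiv.sum_comp e H, Fintype.sum_prod_type, Fintype.sum_bool, ← Finset.sum_add_distrib]
  rw [hre, hre]
  apply Finset.sum_le_sum
  intro g _
  set σT := e (true, g) with hσT
  set σF := e (false, g) with hσF
  have hT : σT j = true := by simp [hσT, he]
  have hF : σF j = false := by simp [hσF, he]
  have hoff : ∀ i, i ≠ j → σT i = σF i := by
    intro i hi; simp [hσT, hσF, he, Equiv.piSplitAt_symm_apply, hi]
  have key1 : ∀ (σ : Fin n → Bool) (f : X → ℝ),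
      E n x (insert j s) σ f = E n x s σ f +
        (1/n : ℝ) * (sgn (σ j) * (|f (x j)| - f (x j))) := by
    intro σ f
    unfold E
    rw [← mul_add]
    congr 1
    have hterm : ∀ i : Fin n,
        sgn (σ i) * (if i ∈ insert j s then |f (x i)| else f (x i)) =
          sgn (σ i) * (if i ∈ s then |f (x i)| else f (x i)) +
            (if i = j then sgn (σ j) * (|f (x j)| - f (x j)) else 0) := by
      intro i
      by_cases hij : i = j
      · subst hij; simp [hj]; ring
      · simp [Finset.mem_insert, hij]
    rw [Finset.sum_congr rfl fun i _ => hterm i, Finset.sum_add_distrib,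
      Finset.sum_ite_eq' Finset.univ j]
    simp
  have key2 : ∀ f : X → ℝ,
      E n x s σT f = E n x s σF f + (1/n : ℝ) * (2 * f (x j)) := by
    intro f
    unfold E
    rw [← mul_add]
    congr 1
    have hterm : ∀ i : Fin n,
        sgn (σT i) * (if i ∈ s then |f (x i)| else f (x i)) =
          sgn (σF i) * (if i ∈ s then |f (x i)| else f (x i)) +
            (if i = j then 2 * f (x j) else 0) := by
      intro i
      by_cases hij : i = j
      · subst hij; simp [hT, hF, sgn, hj]; ring
      · simp [hoff i hij, hij]
    rw [Finset.sum_congr rfl fun i _ => hterm i, Finset.sum_add_distrib,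
      Finset.sum_ite_eq' Finset.univ j]
    simp
  refine ciSup_add_ciSup_le (bddE hn x hbdd s σT) (bddE hn x hbdd s σF) ?_
  intro f f'
  have hc : (0:ℝ) ≤ 1 / n := by positivity
  set a := (f : X → ℝ) (x j) with ha
  set b := (f' : X → ℝ) (x j) with hb
  have h1 := key1 σT (f : X → ℝ)
  have h2 := key1 σF (f' : X → ℝ)
  rw [hT] at h1
  rw [hF] at h2
  simp only [sgn, if_true, if_false, one_mul, Bool.false_eq_true] at h1 h2
  have h3 := key2 (f : X → ℝ)
  have h4 := key2 (f' : X → ℝ)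
  have habs := abs_sub_abs_le_abs_sub a b
  rcases le_total a b with hab | hab
  · apply le_max_of_le_right
    have h5 : |a - b| = -(a - b) := abs_of_nonpos (by linarith)
    have h6 : (|a| - a) - (|b| - b) ≤ 2 * b - 2 * a := by linarith
    have h7 := mul_le_mul_of_nonneg_left h6 hc
    nlinarith [h1, h2, h3, h4, h7]
  · apply le_max_of_le_left
    have h5 : |a - b| = a - b := abs_of_nonneg (by linarith)
    have h6 : (|a| - a) - (|b| - b) ≤ 0 := by linarith
    have h7 := mul_le_mul_of_nonneg_left h6 hc
    nlinarith [h1, h2, h7]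

end Stmt9Aux

/-- Contraction for the absolute value: Rad_Q(|F|) ≤ Rad_Q(F). -/
theorem stmt9 {X : Type*} (n : ℕ) (hn : 0 < n) (x : Fin n → X)
    (F : Set (X → ℝ)) (hne : F.Nonempty)
    (hbdd : ∃ C, ∀ f ∈ F, ∀ a, |f a| ≤ C) :
    rad n x ((fun f => fun a => |f a|) '' F) ≤ rad n x F := by
  classical
  open Stmt9Aux in
  obtain ⟨C, hC⟩ := hbdd
  have hneF := hne.to_subtype
  have hmono : ∀ s : Finset (Fin n),
      ∑ σ : Fin n → Bool, ⨆ f : F, E n x s σ (f : X → ℝ) ≤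
        ∑ σ : Fin n → Bool, ⨆ f : F, E n x (∅ : Finset (Fin n)) σ (f : X → ℝ) := by
    intro s
    induction s using Finset.induction_on with
    | empty => exact le_refl _
    | insert _ _ hj ih => exact (step hn x hne hC hj).trans ih
  have h1 : rad n x ((fun f => fun a => |f a|) '' F) ≤
      (1 / 2 ^ n : ℝ) * ∑ σ : Fin n → Bool,
        ⨆ f : F, E n x (Finset.univ : Finset (Fin n)) σ (f : X → ℝ) := by
    unfold rad
    refine mul_le_mul_of_nonneg_left (Finset.sum_le_sum fun σ _ => ?_) (by positivity)
    have himg : ((fun f => fun a => |f a|) '' F).Nonempty := hne.image _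
    have := himg.to_subtype
    apply ciSup_le
    rintro ⟨g, hg⟩
    obtain ⟨f, hf, rfl⟩ := hg
    have heq : (1 / n : ℝ) * ∑ i, (if σ i then (1:ℝ) else -1) * ((fun a => |f a|) (x i)) =
        E n x (Finset.univ : Finset (Fin n)) σ f := by
      simp [E, sgn]
    calc (1 / n : ℝ) * ∑ i, (if σ i then (1:ℝ) else -1) * ((fun a => |f a|) (x i))
        = E n x Finset.univ σ f := heq
      _ ≤ _ := le_ciSup (bddE hn x hC Finset.univ σ) ⟨f, hf⟩
  have h2 : (1 / 2 ^ n : ℝ) * ∑ σ : Fin n → Bool,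
      ⨆ f : F, E n x (Finset.univ : Finset (Fin n)) σ (f : X → ℝ) ≤
        (1 / 2 ^ n : ℝ) * ∑ σ : Fin n → Bool,
          ⨆ f : F, E n x (∅ : Finset (Fin n)) σ (f : X → ℝ) :=
    mul_le_mul_of_nonneg_left (hmono _) (by positivity)
  have h3 : (1 / 2 ^ n : ℝ) * ∑ σ : Fin n → Bool,
      ⨆ f : F, E n x (∅ : Finset (Fin n)) σ (f : X → ℝ) = rad n x F := by
    unfold rad
    congr 1
  linarith
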